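/- Let F be a totally real field with set of nonzero fractional ideals 𝔉, and fix a set 𝔠 ⊆ 𝔉 of representatives of the narrow ideal class group Cl_F^+(1) = 𝔉/P_+ (P_+ the totally positive principal ideals). Then for each nonzero integral ideal 𝔤, the maps sending the class of a totally positive α ∈ 𝔞 generating 𝔞/𝔤𝔞 over O_F/𝔤 to the ray class of 𝔞^{-1}α induce a bijection ⨆_{𝔞 ∈ 𝔠} Δ\(𝔞/𝔤𝔞)^× → Cl_F^+(𝔤), where Δ is the group of totally positive units and (𝔞/𝔤𝔞)^× denotes the O_F/𝔤-module generators of 𝔞/𝔤𝔞. -/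

import Mathlib

open scoped nonZeroDivisors
open NumberField FractionalIdeal

/-- `x ∈ F` is totally positive: every real embedding sends it to a positive real. -/
def IsTotPos (F : Type*) [Field F] (x : F) : Prop := ∀ τ : F →+* ℝ, 0 < τ x

/-- `x ≡ 1 mod^× 𝔤`. -/
def MulCongOne {F : Type*} [Field F] [NumberField F] (𝔤 : Ideal (𝓞 F)) (x : F) : Prop :=
  ∃ a b : 𝓞 F, (b : F) ≠ 0 ∧ x = (a : F) / (b : F) ∧ a - 1 ∈ 𝔤 ∧ b - 1 ∈ 𝔤

/-- Two fractional ideals lie in the same narrow ray class mod `𝔤`. -/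
def RayEq {F : Type*} [Field F] [NumberField F] (𝔤 : Ideal (𝓞 F))
    (𝔟 𝔟' : FractionalIdeal (𝓞 F)⁰ F) : Prop :=
  ∃ x : F, IsTotPos F x ∧ MulCongOne 𝔤 x ∧ 𝔟' = spanSingleton (𝓞 F)⁰ x * 𝔟

/-- `α` generates `𝔞/𝔤𝔞` as an `𝓞_F/𝔤`-module. -/
def GeneratesModG {F : Type*} [Field F] [NumberField F] (𝔤 : Ideal (𝓞 F))
    (𝔞 : FractionalIdeal (𝓞 F)⁰ F) (α : F) : Prop :=
  α ∈ 𝔞 ∧ ∀ β ∈ 𝔞, ∃ r : 𝓞 F, β - (r : F) * α ∈ (𝔤 : FractionalIdeal (𝓞 F)⁰ F) * 𝔞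

section Helpers

variable {F : Type*} [Field F] [NumberField F]

lemma IsTotPos.ne_zero' (htr : ∀ v : NumberField.InfinitePlace F, v.IsReal)
    {x : F} (hx : IsTotPos F x) : x ≠ 0 := by
  obtain ⟨w⟩ := (inferInstance : Nonempty (InfinitePlace F))
  intro h
  have h2 := hx (NumberField.InfinitePlace.embedding_of_isReal (htr w))
  rw [h, _root_.map_zero] at h2
  exact lt_irrefl 0 h2

lemma isTotPos_one : IsTotPos F 1 := fun τ => by simp

lemma fmem_sub {I : FractionalIdeal (𝓞 F)⁰ F} {x y : F} (hx : x ∈ I) (hy : y ∈ I) :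
    x - y ∈ I :=
  FractionalIdeal.mem_coe.mp
    (Submodule.sub_mem _ (FractionalIdeal.mem_coe.mpr hx) (FractionalIdeal.mem_coe.mpr hy))

lemma coe_mul_mem {I : FractionalIdeal (𝓞 F)⁰ F} (r : 𝓞 F) {x : F} (h : x ∈ I) :
    (r : F) * x ∈ I := by
  have h2 := Submodule.smul_mem (I : Submodule (𝓞 F) F) r (FractionalIdeal.mem_coe.mpr h)
  rwa [Algebra.smul_def, FractionalIdeal.mem_coe] at h2

lemma unit_spanSingleton (u : (𝓞 F)ˣ) :
    spanSingleton (𝓞 F)⁰ ((u : 𝓞 F) : F) = 1 := by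
  apply le_antisymm
  · rw [spanSingleton_le_iff_mem]
    exact (mem_one_iff _).mpr ⟨(u : 𝓞 F), rfl⟩
  · rw [FractionalIdeal.one_le]
    refine (mem_spanSingleton _).mpr ⟨((u⁻¹ : (𝓞 F)ˣ) : 𝓞 F), ?_⟩
    rw [Algebra.smul_def, RingOfIntegers.coe_eq_algebraMap, ← _root_.map_mul, Units.inv_mul, _root_.map_one]

lemma gen_coprime {𝔤 : Ideal (𝓞 F)} {𝔞 : FractionalIdeal (𝓞 F)⁰ F} (h𝔞 : 𝔞 ≠ 0)
    {α : F} (hα : α ≠ 0) (hmem : α ∈ 𝔞)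
    (hgen : ∀ β ∈ 𝔞, ∃ r : 𝓞 F, β - (r : F) * α ∈ (𝔤 : FractionalIdeal (𝓞 F)⁰ F) * 𝔞) :
    ∃ b : 𝓞 F, ((b : F)) ∈ spanSingleton (𝓞 F)⁰ α * 𝔞⁻¹ ∧ b - 1 ∈ 𝔤 ∧ (b : F) ≠ 0 := by
  have hle : 𝔞 ≤ spanSingleton (𝓞 F)⁰ α + (𝔤 : FractionalIdeal (𝓞 F)⁰ F) * 𝔞 := by
    intro β hβ
    have hβ' : β ∈ 𝔞 := hβ
    obtain ⟨r, hr⟩ := hgen β hβ'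
    show β ∈ spanSingleton (𝓞 F)⁰ α + (𝔤 : FractionalIdeal (𝓞 F)⁰ F) * 𝔞
    rw [FractionalIdeal.mem_add]
    exact ⟨(r : F) * α, (mem_spanSingleton _).mpr ⟨r, by rw [Algebra.smul_def]⟩,
      β - (r : F) * α, hr, by ring⟩
  have key : (1 : FractionalIdeal (𝓞 F)⁰ F) ≤
      spanSingleton (𝓞 F)⁰ α * 𝔞⁻¹ + (𝔤 : FractionalIdeal (𝓞 F)⁰ F) := by
    calc (1 : FractionalIdeal (𝓞 F)⁰ F) = 𝔞 * 𝔞⁻¹ := (mul_inv_cancel₀ h𝔞).symm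
      _ ≤ (spanSingleton (𝓞 F)⁰ α + (𝔤 : FractionalIdeal (𝓞 F)⁰ F) * 𝔞) * 𝔞⁻¹ :=
          mul_le_mul_left hle _
      _ = spanSingleton (𝓞 F)⁰ α * 𝔞⁻¹ + (𝔤 : FractionalIdeal (𝓞 F)⁰ F) * (𝔞 * 𝔞⁻¹) := by ring
      _ = spanSingleton (𝓞 F)⁰ α * 𝔞⁻¹ + (𝔤 : FractionalIdeal (𝓞 F)⁰ F) := by
          rw [mul_inv_cancel₀ h𝔞, mul_one]
  have h1 : (1 : F) ∈ spanSingleton (𝓞 F)⁰ α * 𝔞⁻¹ + (𝔤 : FractionalIdeal (𝓞 F)⁰ F) :=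
    key (FractionalIdeal.one_mem_one _)
  rw [FractionalIdeal.mem_add] at h1
  obtain ⟨u, hu, v, hv, huv⟩ := h1
  obtain ⟨g, hg, rfl⟩ := (FractionalIdeal.mem_coeIdeal _).mp hv
  by_cases hcase : u = 0
  · -- then 1 ∈ 𝔤, any nonzero element works
    have hg1 : (algebraMap (𝓞 F) F) g = 1 := by rw [← huv, hcase, zero_add]
    have h1g : (1 : 𝓞 F) ∈ 𝔤 := by
      have : g = 1 := RingOfIntegers.coe_injective (by rw [hg1, _root_.map_one])
      exact this ▸ hg
    have hne : spanSingleton (𝓞 F)⁰ α * 𝔞⁻¹ ≠ 0 :=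
      mul_ne_zero (by simpa [spanSingleton_eq_zero_iff] using hα) (inv_ne_zero h𝔞)
    obtain ⟨x, hx, hx0⟩ : ∃ x ∈ spanSingleton (𝓞 F)⁰ α * 𝔞⁻¹, x ≠ 0 := by
      by_contra hcon
      push_neg at hcon
      refine hne (FractionalIdeal.ext fun y => ⟨fun hy => (mem_zero_iff _).mpr (hcon y hy),
        fun hy => ?_⟩)
      rw [(mem_zero_iff _).mp hy]
      exact FractionalIdeal.mem_coe.mp (Submodule.zero_mem _)
    have hint : spanSingleton (𝓞 F)⁰ α * 𝔞⁻¹ ≤ 1 := by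
      calc spanSingleton (𝓞 F)⁰ α * 𝔞⁻¹ ≤ 𝔞 * 𝔞⁻¹ :=
            mul_le_mul_left ((spanSingleton_le_iff_mem).mpr hmem) _
        _ = 1 := mul_inv_cancel₀ h𝔞
    obtain ⟨b, hb⟩ := (FractionalIdeal.mem_one_iff _).mp (hint hx)
    refine ⟨b, by rw [RingOfIntegers.coe_eq_algebraMap, hb]; exact hx, ?_, by rw [RingOfIntegers.coe_eq_algebraMap, hb]; exact hx0⟩
    have htop : 𝔤 = ⊤ := (Ideal.eq_top_iff_one 𝔤).mpr h1g
    rw [htop]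
    trivial
  · have hune : u = 1 - algebraMap (𝓞 F) F g := by rw [← huv]; ring
    obtain ⟨b, hb⟩ : ∃ b : 𝓞 F, algebraMap (𝓞 F) F b = u := by
      refine ⟨1 - g, ?_⟩
      rw [_root_.map_sub, _root_.map_one, hune]
    refine ⟨b, by rw [RingOfIntegers.coe_eq_algebraMap, hb]; exact hu, ?_, by rw [RingOfIntegers.coe_eq_algebraMap, hb]; exact hcase⟩
    have hbg : b = 1 - g := RingOfIntegers.coe_injective (by rw [hb, hune, _root_.map_sub, _root_.map_one])
    rw [hbg]
    simpa using neg_mem hg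

lemma mulCongOne_of_gen {𝔤 : Ideal (𝓞 F)} {𝔞 : FractionalIdeal (𝓞 F)⁰ F} (h𝔞 : 𝔞 ≠ 0)
    {α : F} (hα : α ≠ 0) (hgen : GeneratesModG 𝔤 𝔞 α) {x : F}
    (hx : (x - 1) * α ∈ (𝔤 : FractionalIdeal (𝓞 F)⁰ F) * 𝔞) : MulCongOne 𝔤 x := by
  obtain ⟨b, hb𝔟, hb1, hb0⟩ := gen_coprime h𝔞 hα hgen.1 hgen.2
  have h2 : (b : F) * ((x - 1) * α) ∈
      spanSingleton (𝓞 F)⁰ α * (𝔤 : FractionalIdeal (𝓞 F)⁰ F) := by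
    have h3 := FractionalIdeal.mul_mem_mul hb𝔟 hx
    have heq : (spanSingleton (𝓞 F)⁰ α * 𝔞⁻¹) * ((𝔤 : FractionalIdeal (𝓞 F)⁰ F) * 𝔞)
        = (spanSingleton (𝓞 F)⁰ α * (𝔤 : FractionalIdeal (𝓞 F)⁰ F)) * (𝔞 * 𝔞⁻¹) := by ring
    rwa [heq, mul_inv_cancel₀ h𝔞, mul_one] at h3
  obtain ⟨y, hy, hyeq⟩ := mem_singleton_mul.mp h2
  have hyv : y = (b : F) * (x - 1) := by
    apply mul_left_cancel₀ hα
    rw [← hyeq]; ring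
  obtain ⟨g, hg, hgeq⟩ := (FractionalIdeal.mem_coeIdeal _).mp hy
  refine ⟨b + g, b, hb0, ?_, ?_, hb1⟩
  · rw [eq_div_iff hb0]
    have hbg : ((b + g : 𝓞 F) : F) = (b : F) + (g : F) := by
      simp [RingOfIntegers.coe_eq_algebraMap, _root_.map_add]
    rw [hbg, show (g : F) = y from hgeq, hyv]
    ring
  · have hh : b + g - 1 = (b - 1) + g := by ring
    rw [hh]
    exact Ideal.add_mem _ hb1 hg

end Helpers

/-- **Decomposition of the narrow ray class group.** Let `F` be totally real, `𝔠` a set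
of representatives of the narrow ideal class group `Cl_F^+(1)` and `𝔤 ≠ 0` an integral
ideal.  The maps sending (the class of) a totally positive generator `α` of `𝔞/𝔤𝔞`
(`𝔞 ∈ 𝔠`) to the ray class of `𝔞⁻¹α` are well defined and induce a bijection
`⨆_{𝔞 ∈ 𝔠} Δ\(𝔞/𝔤𝔞)^× → Cl_F^+(𝔤)`: here this is expressed by well-definedness,
surjectivity, and injectivity of the induced map. -/
theorem ray_class_group_decomposition
    (F : Type*) [Field F] [NumberField F]
    (htr : ∀ v : NumberField.InfinitePlace F, v.IsReal)
    (𝔤 : Ideal (𝓞 F)) (h𝔤 : 𝔤 ≠ ⊥)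
    (𝔠 : Set (FractionalIdeal (𝓞 F)⁰ F))
    (h𝔠0 : ∀ 𝔞 ∈ 𝔠, 𝔞 ≠ 0)
    (h𝔠 : ∀ 𝔟 : FractionalIdeal (𝓞 F)⁰ F, 𝔟 ≠ 0 →
      ∃! 𝔞, 𝔞 ∈ 𝔠 ∧ ∃ x : F, IsTotPos F x ∧ 𝔟 = spanSingleton (𝓞 F)⁰ x * 𝔞) :
    -- well-definedness on `Δ\(𝔞/𝔤𝔞)^×`
    (∀ 𝔞 ∈ 𝔠, ∀ α α' : F, IsTotPos F α → IsTotPos F α' →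
      GeneratesModG 𝔤 𝔞 α → GeneratesModG 𝔤 𝔞 α' →
      (∃ ε : (𝓞 F)ˣ, IsTotPos F ((ε : 𝓞 F) : F) ∧
        ((ε : 𝓞 F) : F) * α - α' ∈ (𝔤 : FractionalIdeal (𝓞 F)⁰ F) * 𝔞) →
      RayEq 𝔤 (𝔞⁻¹ * spanSingleton (𝓞 F)⁰ α) (𝔞⁻¹ * spanSingleton (𝓞 F)⁰ α')) ∧
    -- surjectivity onto `Cl_F^+(𝔤)` (whose classes are represented by integral ideals
    -- prime to `𝔤`)
    (∀ 𝔟 : Ideal (𝓞 F), 𝔟 ≠ ⊥ → IsCoprime 𝔟 𝔤 →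
      ∃ 𝔞 ∈ 𝔠, ∃ α : F, IsTotPos F α ∧ GeneratesModG 𝔤 𝔞 α ∧
        RayEq 𝔤 (𝔞⁻¹ * spanSingleton (𝓞 F)⁰ α) (𝔟 : FractionalIdeal (𝓞 F)⁰ F)) ∧
    -- injectivity
    (∀ 𝔞 ∈ 𝔠, ∀ 𝔞' ∈ 𝔠, ∀ α α' : F, IsTotPos F α → IsTotPos F α' →
      GeneratesModG 𝔤 𝔞 α → GeneratesModG 𝔤 𝔞' α' →
      RayEq 𝔤 (𝔞⁻¹ * spanSingleton (𝓞 F)⁰ α) (𝔞'⁻¹ * spanSingleton (𝓞 F)⁰ α') →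
      𝔞 = 𝔞' ∧ ∃ ε : (𝓞 F)ˣ, IsTotPos F ((ε : 𝓞 F) : F) ∧
        ((ε : 𝓞 F) : F) * α - α' ∈ (𝔤 : FractionalIdeal (𝓞 F)⁰ F) * 𝔞) := by
  refine ⟨?_, ?_, ?_⟩
  · -- well-definedness
    rintro 𝔞 h𝔞mem α α' hαpos hα'pos hgen hgen' ⟨ε, hεpos, hεmem⟩
    have h𝔞0 : 𝔞 ≠ 0 := h𝔠0 𝔞 h𝔞mem
    have hα0 : α ≠ 0 := hαpos.ne_zero' htr
    have hα'0 : α' ≠ 0 := hα'pos.ne_zero' htr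
    have hε0 : ((ε : 𝓞 F) : F) ≠ 0 := hεpos.ne_zero' htr
    set e : F := ((ε : 𝓞 F) : F) with he
    set x : F := α' / (e * α) with hxdef
    have hxpos : IsTotPos F x := fun τ => by
      rw [hxdef, map_div₀, _root_.map_mul]
      exact div_pos (hα'pos τ) (mul_pos (hεpos τ) (hαpos τ))
    have hein : ((↑(ε⁻¹) : 𝓞 F) : F) = e⁻¹ := by
      apply eq_inv_of_mul_eq_one_left
      rw [he, RingOfIntegers.coe_eq_algebraMap, RingOfIntegers.coe_eq_algebraMap,
        ← _root_.map_mul, Units.inv_mul, _root_.map_one]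
    have hμ : α' - e * α ∈ (𝔤 : FractionalIdeal (𝓞 F)⁰ F) * 𝔞 := by
      have h2 := Submodule.neg_mem
        (((𝔤 : FractionalIdeal (𝓞 F)⁰ F) * 𝔞 : FractionalIdeal (𝓞 F)⁰ F) : Submodule (𝓞 F) F)
        (FractionalIdeal.mem_coe.mpr hεmem)
      rw [neg_sub] at h2
      exact FractionalIdeal.mem_coe.mp h2
    have hxα : (x - 1) * α ∈ (𝔤 : FractionalIdeal (𝓞 F)⁰ F) * 𝔞 := by
      have hcalc : (x - 1) * α = ((↑(ε⁻¹) : 𝓞 F) : F) * (α' - e * α) := by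
        rw [hein, hxdef]
        field_simp
      rw [hcalc]
      exact coe_mul_mem _ hμ
    refine ⟨x, hxpos, mulCongOne_of_gen h𝔞0 hα0 hgen hxα, ?_⟩
    have hspan : spanSingleton (𝓞 F)⁰ x * spanSingleton (𝓞 F)⁰ α
        = spanSingleton (𝓞 F)⁰ ((↑(ε⁻¹) : 𝓞 F) : F) * spanSingleton (𝓞 F)⁰ α' := by
      rw [spanSingleton_mul_spanSingleton, spanSingleton_mul_spanSingleton]
      congr 1
      rw [hein, hxdef]
      field_simp
    rw [unit_spanSingleton, one_mul] at hspan
    rw [show spanSingleton (𝓞 F)⁰ x * (𝔞⁻¹ * spanSingleton (𝓞 F)⁰ α)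
        = 𝔞⁻¹ * (spanSingleton (𝓞 F)⁰ x * spanSingleton (𝓞 F)⁰ α) from by ring, hspan]
  · -- surjectivity
    intro 𝔟 h𝔟0 hcop
    have h𝔟ne : (𝔟 : FractionalIdeal (𝓞 F)⁰ F) ≠ 0 := by
      rwa [Ne, FractionalIdeal.coeIdeal_eq_zero]
    obtain ⟨𝔞, ⟨h𝔞mem, x, hxpos, hx⟩, -⟩ :=
      h𝔠 ((𝔟 : FractionalIdeal (𝓞 F)⁰ F))⁻¹ (inv_ne_zero h𝔟ne)
    have hx0 : x ≠ 0 := hxpos.ne_zero' htr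
    have h𝔞0 : 𝔞 ≠ 0 := h𝔠0 𝔞 h𝔞mem
    have hone : (1 : F) ∈ ((𝔟 : FractionalIdeal (𝓞 F)⁰ F))⁻¹ := by
      have hle : (𝔟 : FractionalIdeal (𝓞 F)⁰ F) ≤ 1 := FractionalIdeal.coeIdeal_le_one
      have h2 : (1 : FractionalIdeal (𝓞 F)⁰ F) ≤ ((𝔟 : FractionalIdeal (𝓞 F)⁰ F))⁻¹ := by
        calc (1 : FractionalIdeal (𝓞 F)⁰ F)
            = (𝔟 : FractionalIdeal (𝓞 F)⁰ F) * ((𝔟 : FractionalIdeal (𝓞 F)⁰ F))⁻¹ :=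
              (mul_inv_cancel₀ h𝔟ne).symm
          _ ≤ 1 * ((𝔟 : FractionalIdeal (𝓞 F)⁰ F))⁻¹ := mul_le_mul_left hle _
          _ = ((𝔟 : FractionalIdeal (𝓞 F)⁰ F))⁻¹ := one_mul _
      exact h2 (FractionalIdeal.one_mem_one _)
    have hαmem : x⁻¹ ∈ 𝔞 := by
      rw [hx] at hone
      obtain ⟨y, hy, hy2⟩ := mem_singleton_mul.mp hone
      have hyx : y = x⁻¹ := eq_inv_of_mul_eq_one_left (by rw [mul_comm, ← hy2])
      rwa [hyx] at hy
    obtain ⟨u, hu, g, hg, hug⟩ := hcop.exists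
    refine ⟨𝔞, h𝔞mem, x⁻¹, fun τ => by rw [map_inv₀]; exact inv_pos.mpr (hxpos τ),
      ⟨hαmem, ?_⟩, ?_⟩
    · intro β hβ
      have hxβ : x * β ∈ ((𝔟 : FractionalIdeal (𝓞 F)⁰ F))⁻¹ := by
        rw [hx]
        exact FractionalIdeal.mul_mem_mul (mem_spanSingleton_self _ _) hβ
      have hint : (u : F) * (x * β) ∈ (1 : FractionalIdeal (𝓞 F)⁰ F) := by
        have h2 := FractionalIdeal.mul_mem_mul
          ((FractionalIdeal.mem_coeIdeal _).mpr ⟨u, hu, rfl⟩) hxβ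
        rwa [mul_inv_cancel₀ h𝔟ne] at h2
      obtain ⟨r, hr⟩ := (FractionalIdeal.mem_one_iff _).mp hint
      refine ⟨r, ?_⟩
      have h1 : (u : F) + (g : F) = 1 := by
        rw [RingOfIntegers.coe_eq_algebraMap, RingOfIntegers.coe_eq_algebraMap,
          ← _root_.map_add, hug, _root_.map_one]
      have hr' : (r : F) = (u : F) * (x * β) := hr
      have hux : (r : F) * x⁻¹ = (u : F) * β := by
        rw [hr']
        field_simp
      have hkey : β - (r : F) * x⁻¹ = (g : F) * β := by
        rw [hux]
        linear_combination -β * h1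
      rw [hkey]
      exact FractionalIdeal.mul_mem_mul ((FractionalIdeal.mem_coeIdeal _).mpr ⟨g, hg, rfl⟩) hβ
    · refine ⟨1, isTotPos_one, ⟨1, 1, by simp, by simp, by simp, by simp⟩, ?_⟩
      rw [spanSingleton_one, one_mul,
        show 𝔞⁻¹ * spanSingleton (𝓞 F)⁰ x⁻¹ = (spanSingleton (𝓞 F)⁰ x * 𝔞)⁻¹ from by
          rw [mul_inv, spanSingleton_inv, mul_comm], ← hx, inv_inv]
  · -- injectivity
    rintro 𝔞 h𝔞mem 𝔞' h𝔞'mem α α' hαpos hα'pos hgen hgen' ⟨x, hxpos, hxcong, heq⟩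
    have h𝔞0 : 𝔞 ≠ 0 := h𝔠0 𝔞 h𝔞mem
    have h𝔞'0 : 𝔞' ≠ 0 := h𝔠0 𝔞' h𝔞'mem
    have hα0 : α ≠ 0 := hαpos.ne_zero' htr
    have hα'0 : α' ≠ 0 := hα'pos.ne_zero' htr
    have hx0 : x ≠ 0 := hxpos.ne_zero' htr
    set y : F := α' / (x * α) with hydef
    have hypos : IsTotPos F y := fun τ => by
      rw [hydef, map_div₀, _root_.map_mul]
      exact div_pos (hα'pos τ) (mul_pos (hxpos τ) (hαpos τ))
    have hy : 𝔞' = spanSingleton (𝓞 F)⁰ y * 𝔞 := by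
      have hy' : y = α' * (x⁻¹ * α⁻¹) := by
        rw [hydef]; field_simp
      have key : 𝔞'⁻¹ * (spanSingleton (𝓞 F)⁰ y * 𝔞) = 1 := by
        calc 𝔞'⁻¹ * (spanSingleton (𝓞 F)⁰ y * 𝔞)
            = (𝔞'⁻¹ * spanSingleton (𝓞 F)⁰ α') *
              (spanSingleton (𝓞 F)⁰ x⁻¹ * (spanSingleton (𝓞 F)⁰ α⁻¹ * 𝔞)) := by
              rw [hy', ← spanSingleton_mul_spanSingleton, ← spanSingleton_mul_spanSingleton]
              ring
          _ = (spanSingleton (𝓞 F)⁰ x * (𝔞⁻¹ * spanSingleton (𝓞 F)⁰ α)) *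
              (spanSingleton (𝓞 F)⁰ x⁻¹ * (spanSingleton (𝓞 F)⁰ α⁻¹ * 𝔞)) := by rw [heq]
          _ = (spanSingleton (𝓞 F)⁰ x * spanSingleton (𝓞 F)⁰ x⁻¹) *
              ((spanSingleton (𝓞 F)⁰ α * spanSingleton (𝓞 F)⁰ α⁻¹) * (𝔞⁻¹ * 𝔞)) := by ring
          _ = 1 := by
              rw [spanSingleton_mul_spanSingleton, spanSingleton_mul_spanSingleton,
                mul_inv_cancel₀ hx0, mul_inv_cancel₀ hα0, inv_mul_cancel₀ h𝔞0,
                spanSingleton_one]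
              simp
      exact ((inv_mul_eq_one₀ h𝔞'0).mp key)
    obtain ⟨𝔞₀, -, huniq⟩ := h𝔠 𝔞' (h𝔠0 𝔞' h𝔞'mem)
    have e1 : 𝔞' = 𝔞₀ := huniq 𝔞' ⟨h𝔞'mem, 1, isTotPos_one, by rw [spanSingleton_one, one_mul]⟩
    have e2 : 𝔞 = 𝔞₀ := huniq 𝔞 ⟨h𝔞mem, y, hypos, hy⟩
    have h𝔞𝔞' : 𝔞 = 𝔞' := e2.trans e1.symm
    refine ⟨h𝔞𝔞', ?_⟩
    rw [← h𝔞𝔞'] at heq hgen'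
    have hsp : spanSingleton (𝓞 F)⁰ α' = spanSingleton (𝓞 F)⁰ (x * α) := by
      calc spanSingleton (𝓞 F)⁰ α' = 𝔞 * (𝔞⁻¹ * spanSingleton (𝓞 F)⁰ α') := by
            rw [← mul_assoc, mul_inv_cancel₀ h𝔞0, one_mul]
        _ = 𝔞 * (spanSingleton (𝓞 F)⁰ x * (𝔞⁻¹ * spanSingleton (𝓞 F)⁰ α)) := by rw [heq]
        _ = (𝔞 * 𝔞⁻¹) * (spanSingleton (𝓞 F)⁰ x * spanSingleton (𝓞 F)⁰ α) := by ring
        _ = spanSingleton (𝓞 F)⁰ (x * α) := by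
            rw [mul_inv_cancel₀ h𝔞0, one_mul, spanSingleton_mul_spanSingleton]
    have hmem1 : α' ∈ spanSingleton (𝓞 F)⁰ (x * α) := hsp ▸ mem_spanSingleton_self _ α'
    have hmem2 : x * α ∈ spanSingleton (𝓞 F)⁰ α' := hsp ▸ mem_spanSingleton_self _ (x * α)
    obtain ⟨r, hr⟩ := (mem_spanSingleton _).mp hmem1
    obtain ⟨r', hr'⟩ := (mem_spanSingleton _).mp hmem2
    have hrF : (r : F) * (x * α) = α' := by rw [← Algebra.smul_def]; exact hr
    have hr'F : (r' : F) * α' = x * α := by rw [← Algebra.smul_def]; exact hr'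
    have hrr' : r * r' = 1 := by
      apply RingOfIntegers.coe_injective
      rw [_root_.map_mul, _root_.map_one]
      have h2 : ((r : F) * (r' : F)) * α' = 1 * α' := by
        rw [one_mul, mul_assoc, hr'F, hrF]
      exact mul_right_cancel₀ hα'0 h2
    refine ⟨⟨r, r', hrr', by rw [mul_comm] at hrr'; exact hrr'⟩, ?_, ?_⟩
    · intro τ
      show 0 < τ (r : F)
      have hrval : (r : F) = α' / (x * α) := by
        rw [eq_div_iff (mul_ne_zero hx0 hα0)]
        exact hrF
      rw [hrval, map_div₀, _root_.map_mul]
      exact div_pos (hα'pos τ) (mul_pos (hxpos τ) (hαpos τ))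
    · show (r : F) * α - α' ∈ (𝔤 : FractionalIdeal (𝓞 F)⁰ F) * 𝔞
      obtain ⟨a, b, hb0, hxab, ha, hb⟩ := hxcong
      have hbx : (b : F) * x = (a : F) := by
        rw [hxab]
        field_simp
      have hμ𝔞 : (r : F) * α - α' ∈ 𝔞 := fmem_sub (coe_mul_mem r hgen.1) hgen'.1
      have h1 : (b : F) * ((r : F) * α - α') ∈ (𝔤 : FractionalIdeal (𝓞 F)⁰ F) * 𝔞 := by
        have hc : (b : F) * ((r : F) * α - α') = ((r * (b - a) : 𝓞 F) : F) * α := by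
          have hcast : ((r * (b - a) : 𝓞 F) : F) = (r : F) * ((b : F) - (a : F)) := by
            simp [RingOfIntegers.coe_eq_algebraMap, _root_.map_mul, _root_.map_sub]
          rw [hcast, ← hrF, ← hbx]
          ring
        rw [hc]
        refine FractionalIdeal.mul_mem_mul
          ((FractionalIdeal.mem_coeIdeal _).mpr ⟨r * (b - a), ?_, rfl⟩) hgen.1
        refine Ideal.mul_mem_left _ r ?_
        have hba : b - a = (b - 1) - (a - 1) := by ring
        rw [hba]
        exact Ideal.sub_mem _ hb ha
      have h2 : ((b - 1 : 𝓞 F) : F) * ((r : F) * α - α') ∈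
          (𝔤 : FractionalIdeal (𝓞 F)⁰ F) * 𝔞 :=
        FractionalIdeal.mul_mem_mul ((FractionalIdeal.mem_coeIdeal _).mpr ⟨b - 1, hb, rfl⟩) hμ𝔞
      have hfin : (r : F) * α - α' = (b : F) * ((r : F) * α - α')
          - ((b - 1 : 𝓞 F) : F) * ((r : F) * α - α') := by
        have hcast : ((b - 1 : 𝓞 F) : F) = (b : F) - 1 := by
          simp [RingOfIntegers.coe_eq_algebraMap, _root_.map_sub]
        rw [hcast]
        ring
      rw [hfin]
      exact fmem_sub h1 h2
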